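/- Let p > 3 be prime and for integers a, b define λ_{a,b}(p) = -∑_{x mod p} ((x³+ax+b)/p), where (·/p) is the Legendre symbol. Then ∑_{α mod p} ∑_{β mod p} λ_{α,β}(p)² = p²(p-1). -/

import Mathlib

open Finset

section key
variable (p : ℕ) [Fact p.Prime]

private lemma ringchar_ne (hp : 3 < p) : ringChar (ZMod p) ≠ 2 := by
  rw [ZMod.ringChar_zmod_n]; omega

private lemma key_shift (hp : 3 < p) (c : ZMod p) (hc : c ≠ 0) :
    ∑ x : ZMod p, quadraticChar (ZMod p) x * quadraticChar (ZMod p) (x + c) = -1 := by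
  classical
  have h1 : ∀ x : ZMod p, x ≠ 0 →
      quadraticChar (ZMod p) x * quadraticChar (ZMod p) (x + c)
        = quadraticChar (ZMod p) (1 + c * x⁻¹) := by
    intro x hx
    have : x + c = x * (1 + c * x⁻¹) := by field_simp
    rw [this, map_mul, ← mul_assoc, ← pow_two, quadraticChar_sq_one hx, one_mul]
  rw [← Finset.sum_erase (univ) (a := (0 : ZMod p)) (by simp),
    Finset.sum_congr rfl (fun x hx => h1 x (Finset.ne_of_mem_erase hx))]
  have hbij : ∑ x ∈ univ.erase (0 : ZMod p), quadraticChar (ZMod p) (1 + c * x⁻¹)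
      = ∑ y ∈ univ.erase (1 : ZMod p), quadraticChar (ZMod p) y := by
    refine Finset.sum_nbij' (fun x => 1 + c * x⁻¹) (fun y => c * (y - 1)⁻¹)
      ?_ ?_ ?_ ?_ ?_
    · intro x hx
      have hx0 : x ≠ 0 := Finset.ne_of_mem_erase hx
      simp only [mem_erase, mem_univ, and_true]
      intro h
      rcases mul_eq_zero.mp (add_eq_left.mp h) with h' | h'
      · exact hc h'
      · exact hx0 (inv_eq_zero.mp h')
    · intro y hy
      have hy1 : y ≠ 1 := Finset.ne_of_mem_erase hy
      simp only [mem_erase, mem_univ, and_true]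
      exact mul_ne_zero hc (inv_ne_zero (sub_ne_zero.mpr hy1))
    · intro x hx
      have hx0 : x ≠ 0 := Finset.ne_of_mem_erase hx
      field_simp
      simp [hc]
    · intro y hy
      have hy1 : y ≠ 1 := Finset.ne_of_mem_erase hy
      have h0 : y - 1 ≠ 0 := sub_ne_zero.mpr hy1
      field_simp
      ring
    · intro x hx; rfl
  rw [hbij]
  have hs := quadraticChar_sum_zero (F := ZMod p) (ringchar_ne p hp)
  have h2 : ∑ y ∈ univ.erase (1 : ZMod p), quadraticChar (ZMod p) y
      = (∑ y : ZMod p, quadraticChar (ZMod p) y) - quadraticChar (ZMod p) 1 := by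
    rw [← Finset.sum_erase_add univ _ (Finset.mem_univ 1)]; ring
  rw [h2, hs]; simp

private lemma pair_sum (hp : 3 < p) (u v : ZMod p) :
    ∑ β : ZMod p, (quadraticChar (ZMod p) (u + β) : ℤ) * quadraticChar (ZMod p) (v + β)
      = if u = v then (p : ℤ) - 1 else -1 := by
  classical
  have hre : ∑ β : ZMod p, (quadraticChar (ZMod p) (u + β) : ℤ) * quadraticChar (ZMod p) (v + β)
      = ∑ β : ZMod p, (quadraticChar (ZMod p) β : ℤ) * quadraticChar (ZMod p) (β + (v - u)) := by
    refine Fintype.sum_equiv (Equiv.addLeft u) _ _ (fun β => ?_)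
    simp only [Equiv.coe_addLeft]
    congr 1
    ring_nf
  rw [hre]
  by_cases h : u = v
  · subst h
    simp only [sub_self, add_zero, if_pos rfl]
    have : ∀ β : ZMod p, (quadraticChar (ZMod p) β : ℤ) * quadraticChar (ZMod p) β
        = if β = 0 then 0 else 1 := by
      intro β
      by_cases hβ : β = 0
      · simp [hβ]
      · rw [← pow_two, quadraticChar_sq_one hβ]; simp [hβ]
    rw [Finset.sum_congr rfl fun β _ => this β]
    have : ∀ β : ZMod p, (if β = 0 then (0:ℤ) else 1) = 1 - (if β = 0 then 1 else 0) := by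
      intro β; split <;> ring
    rw [Finset.sum_congr rfl fun β _ => this β, Finset.sum_sub_distrib,
      Finset.sum_ite_eq' univ (0 : ZMod p) (fun _ => (1:ℤ))]
    simp [Finset.card_univ, ZMod.card]
  · rw [if_neg h]
    have hc : v - u ≠ 0 := sub_ne_zero.mpr (Ne.symm h)
    have := key_shift p hp (v - u) hc
    exact_mod_cast this

end key

theorem lambda_square_average
    (p : ℕ) [Fact p.Prime] (hp : 3 < p) :
    ∑ α : ZMod p, ∑ β : ZMod p,
      (-(∑ x : ZMod p,
          legendreSym p ((x.val : ℤ) ^ 3 + (α.val : ℤ) * (x.val : ℤ) + (β.val : ℤ)))) ^ 2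
      = (p : ℤ) ^ 2 * ((p : ℤ) - 1) := by
  classical
  have hcast : ∀ (α β x : ZMod p),
      legendreSym p ((x.val : ℤ) ^ 3 + (α.val : ℤ) * (x.val : ℤ) + (β.val : ℤ))
        = quadraticChar (ZMod p) (x ^ 3 + α * x + β) := by
    intro α β x
    simp only [legendreSym]
    congr 1
    push_cast
    simp [ZMod.natCast_val, ZMod.cast_id]
  have step1 : ∀ α β : ZMod p,
      (-(∑ x : ZMod p,
          legendreSym p ((x.val : ℤ) ^ 3 + (α.val : ℤ) * (x.val : ℤ) + (β.val : ℤ)))) ^ 2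
      = ∑ x : ZMod p, ∑ y : ZMod p,
          (quadraticChar (ZMod p) (x ^ 3 + α * x + β) : ℤ)
            * quadraticChar (ZMod p) (y ^ 3 + α * y + β) := by
    intro α β
    rw [neg_sq, Finset.sum_congr rfl (fun x _ => hcast α β x), pow_two, Finset.sum_mul_sum]
  calc ∑ α : ZMod p, ∑ β : ZMod p,
      (-(∑ x : ZMod p,
          legendreSym p ((x.val : ℤ) ^ 3 + (α.val : ℤ) * (x.val : ℤ) + (β.val : ℤ)))) ^ 2
      = ∑ α : ZMod p, ∑ β : ZMod p, ∑ x : ZMod p, ∑ y : ZMod p,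
          (quadraticChar (ZMod p) (x ^ 3 + α * x + β) : ℤ)
            * quadraticChar (ZMod p) (y ^ 3 + α * y + β) := by
        exact Finset.sum_congr rfl fun α _ => Finset.sum_congr rfl fun β _ => step1 α β
    _ = ∑ α : ZMod p, ∑ x : ZMod p, ∑ y : ZMod p, ∑ β : ZMod p,
          (quadraticChar (ZMod p) (x ^ 3 + α * x + β) : ℤ)
            * quadraticChar (ZMod p) (y ^ 3 + α * y + β) := by
        refine Finset.sum_congr rfl fun α _ => ?_
        rw [Finset.sum_comm]
        exact Finset.sum_congr rfl fun x _ => Finset.sum_comm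
    _ = ∑ α : ZMod p, ∑ x : ZMod p, ∑ y : ZMod p,
          (if x ^ 3 + α * x = y ^ 3 + α * y then (p : ℤ) - 1 else -1) := by
        refine Finset.sum_congr rfl fun α _ => Finset.sum_congr rfl fun x _ =>
          Finset.sum_congr rfl fun y _ => ?_
        have := pair_sum p hp (x ^ 3 + α * x) (y ^ 3 + α * y)
        simpa [add_assoc] using this
    _ = ∑ x : ZMod p, ∑ y : ZMod p, ∑ α : ZMod p,
          (if x ^ 3 + α * x = y ^ 3 + α * y then (p : ℤ) - 1 else -1) := by
        rw [Finset.sum_comm]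
        exact Finset.sum_congr rfl fun x _ => Finset.sum_comm
    _ = ∑ x : ZMod p, ∑ y : ZMod p,
          (if x = y then (p : ℤ) * ((p : ℤ) - 1) else 0) := by
        refine Finset.sum_congr rfl fun x _ => Finset.sum_congr rfl fun y _ => ?_
        by_cases hxy : x = y
        · subst hxy
          rw [if_pos rfl, Finset.sum_congr rfl (fun α _ => if_pos rfl), Finset.sum_const,
            Finset.card_univ, ZMod.card, nsmul_eq_mul]
        · rw [if_neg hxy]
          have hiff : ∀ α : ZMod p,
              (x ^ 3 + α * x = y ^ 3 + α * y) ↔ α = -(x ^ 2 + x * y + y ^ 2) := by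
            intro α
            constructor
            · intro h
              have h2 : (x - y) * (α + (x ^ 2 + x * y + y ^ 2)) = 0 := by
                linear_combination h
              rcases mul_eq_zero.mp h2 with h' | h'
              · exact absurd h' (sub_ne_zero.mpr hxy)
              · exact eq_neg_of_add_eq_zero_left h'
            · intro h; subst h; ring
          rw [Finset.sum_congr rfl (fun α _ => by
            rw [show (if x ^ 3 + α * x = y ^ 3 + α * y then (p : ℤ) - 1 else -1)
              = (if α = -(x ^ 2 + x * y + y ^ 2) then (p : ℤ) else 0) - 1 from by
                by_cases hα : α = -(x ^ 2 + x * y + y ^ 2)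
                · rw [if_pos ((hiff α).mpr hα), if_pos hα]
                · rw [if_neg (fun h => hα ((hiff α).mp h)), if_neg hα]; ring])]
          rw [Finset.sum_sub_distrib,
            Finset.sum_ite_eq' Finset.univ (-(x ^ 2 + x * y + y ^ 2)) (fun _ => (p : ℤ)),
            Finset.sum_const, Finset.card_univ, ZMod.card]
          simp
    _ = (p : ℤ) ^ 2 * ((p : ℤ) - 1) := by
        rw [Finset.sum_congr rfl (fun x _ =>
          Finset.sum_ite_eq Finset.univ x (fun _ => (p : ℤ) * ((p : ℤ) - 1)))]
        simp [Finset.sum_const, Finset.card_univ, ZMod.card]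
        ring
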